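/- Let x, y ∈ A satisfy ε(x) = 0 and ε(y) = 0, and let (pⱼ)ⱼ, (qⱼ)ⱼ be finite families in A with Δ(x*y) = Σⱼ pⱼ ⊗ qⱼ. Then Σⱼ ⟨c(pⱼ), c(S(qⱼ*))⟩ = − ⟨c((S(x))*), c(S(y*))⟩ − ⟨c(y), c(x)⟩. (In particular, ψ(x*y) = −⟨c((Sx)*), c(S(y*))⟩ − ⟨c(y), c(x)⟩ for the functional ψ defined by ψ(x) = Σᵢ ⟨c(yᵢ), c(S(zᵢ*))⟩ whenever Δx = Σᵢ yᵢ ⊗ zᵢ.) -/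

import Mathlib

open scoped TensorProduct InnerProductSpace
open HopfAlgebra

-- The paper's inner product `⟨u, v⟫` is linear in `u`; it equals Mathlib's `⟪v, u⟫_ℂ`.
open Coalgebra

section HopfAux

variable {R : Type*} {A : Type*} [CommSemiring R] [Semiring A] [HopfAlgebra R A]

lemma sum_counit_smul_right' {ι : Type*} {a : A} (r : Coalgebra.Repr R a ι) :
    ∑ i ∈ r.index, counit (R := R) (r.left i) • r.right i = a := by
  have h := congrArg (TensorProduct.lid R A) (Coalgebra.sum_counit_tmul_eq r)
  rw [map_sum] at h
  simp only [TensorProduct.lid_tmul] at h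
  simpa using h

lemma sum_smul_counit_left' {ι : Type*} {a : A} (r : Coalgebra.Repr R a ι) :
    ∑ i ∈ r.index, counit (R := R) (r.right i) • r.left i = a := by
  have h := congrArg (TensorProduct.rid R A) (Coalgebra.sum_tmul_counit_eq r)
  rw [map_sum] at h
  simp only [TensorProduct.rid_tmul] at h
  simpa using h

/-- product representation -/
noncomputable def mulRepr {ι κ : Type*} {a b : A} (ra : Coalgebra.Repr R a ι)
    (rb : Coalgebra.Repr R b κ) :
    Coalgebra.Repr R (a * b) (ι × κ) where
  index := ra.index ×ˢ rb.index
  left := fun p => ra.left p.1 * rb.left p.2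
  right := fun p => ra.right p.1 * rb.right p.2
  eq := by
    rw [Finset.sum_product]
    rw [Bialgebra.comul_mul, ← ra.eq, ← rb.eq, Finset.sum_mul_sum]
    simp [Algebra.TensorProduct.tmul_mul_tmul]

lemma counit_antipode' (a : A) :
    counit (R := R) (antipode (R := R) a) = counit (R := R) a := by
  set r := ℛ R a
  have h := congrArg (counit (R := R)) (sum_antipode_mul_eq_smul r)
  rw [map_sum] at h
  simp only [Bialgebra.counit_mul] at h
  calc counit (R := R) (antipode (R := R) a)
      = counit (R := R) (antipode (R := R)
          (∑ i ∈ r.index, counit (R := R) (r.right i) • r.left i)) := by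
        rw [sum_smul_counit_left']
    _ = ∑ i ∈ r.index, counit (R := R) (antipode (R := R) (r.left i)) * counit (R := R) (r.right i) := by
        rw [map_sum, map_sum]
        refine Finset.sum_congr rfl fun i _ => ?_
        rw [map_smul, map_smul, smul_eq_mul, mul_comm]
    _ = counit (R := R) a := by
        rw [h]
        simp [Bialgebra.counit_one]

/-- auxiliary trilinear evaluation map -/
noncomputable def phiAux (p u v : A) : (A ⊗[R] (A ⊗[R] A)) →ₗ[R] A :=
  LinearMap.mul' R A ∘ₗ TensorProduct.map
    (LinearMap.mulLeft R (antipode (R := R) p) ∘ₗ antipode (R := R))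
    (LinearMap.mul' R A ∘ₗ TensorProduct.map (LinearMap.mulRight R u)
      ((antipode (R := R)) ∘ₗ LinearMap.mulRight R v))

@[simp] lemma phiAux_tmul (p u v x y z : A) :
    phiAux (R := R) p u v (x ⊗ₜ[R] (y ⊗ₜ[R] z)) =
      (antipode (R := R) p * antipode (R := R) x) *
        ((y * u) * antipode (R := R) (z * v)) := by
  simp [phiAux, LinearMap.mul'_apply]

/-- auxiliary trilinear evaluation map -/
noncomputable def psiAux (a : A) : (A ⊗[R] (A ⊗[R] A)) →ₗ[R] A :=
  LinearMap.mul' R A ∘ₗ TensorProduct.map (antipode (R := R))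
    (LinearMap.mul' R A ∘ₗ TensorProduct.map (LinearMap.id)
      ((antipode (R := R)) ∘ₗ LinearMap.mulLeft R a))

@[simp] lemma psiAux_tmul (a x y z : A) :
    psiAux (R := R) a (x ⊗ₜ[R] (y ⊗ₜ[R] z)) =
      antipode (R := R) x * (y * antipode (R := R) (a * z)) := by
  simp [psiAux, LinearMap.mul'_apply]

theorem antipode_mul_rev (a b : A) :
    antipode (R := R) (a * b) = antipode (R := R) b * antipode (R := R) a := by
  set ra := ℛ R a with hra
  set rb := ℛ R b with hrb
  set sa := fun i => ℛ R (ra.right i) with hsa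
  set ta := fun i => ℛ R (ra.left i) with hta
  set sb := fun j => ℛ R (rb.right j) with hsb
  set tb := fun j => ℛ R (rb.left j) with htb
  have hEa := Coalgebra.sum_tmul_tmul_eq (R := R) ra ta sa
  have hEb := Coalgebra.sum_tmul_tmul_eq (R := R) rb tb sb
  set M : A := ∑ j ∈ rb.index, ∑ l ∈ (sb j).index,
      phiAux (R := R) (rb.left j) ((sb j).left l) ((sb j).right l)
        (∑ i ∈ ra.index, ∑ k ∈ (sa i).index,
          ra.left i ⊗ₜ[R] ((sa i).left k ⊗ₜ[R] (sa i).right k)) with hM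
  have claim2 : M = antipode (R := R) (a * b) := by
    calc M = ∑ j ∈ rb.index, ∑ l ∈ (sb j).index,
          phiAux (R := R) (rb.left j) ((sb j).left l) ((sb j).right l)
            (∑ i ∈ ra.index, ∑ k ∈ (ta i).index,
              (ta i).left k ⊗ₜ[R] ((ta i).right k ⊗ₜ[R] ra.right i)) := by
          rw [hM, hEa]
      _ = ∑ j ∈ rb.index, ∑ l ∈ (sb j).index, ∑ i ∈ ra.index, ∑ k ∈ (ta i).index,
            (antipode (R := R) (rb.left j) * antipode (R := R) ((ta i).left k)) *
              (((ta i).right k * (sb j).left l) *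
                antipode (R := R) (ra.right i * (sb j).right l)) := by
          simp only [map_sum, phiAux_tmul]
      _ = ∑ j ∈ rb.index, ∑ l ∈ (sb j).index, ∑ i ∈ ra.index,
            counit (R := R) (ra.left i) •
              (antipode (R := R) (rb.left j) *
                ((sb j).left l * antipode (R := R) (ra.right i * (sb j).right l))) := by
          refine Finset.sum_congr rfl fun j _ => Finset.sum_congr rfl fun l _ =>
            Finset.sum_congr rfl fun i _ => ?_
          calc ∑ k ∈ (ta i).index,
                (antipode (R := R) (rb.left j) * antipode (R := R) ((ta i).left k)) *
                  (((ta i).right k * (sb j).left l) *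
                    antipode (R := R) (ra.right i * (sb j).right l))
              = ∑ k ∈ (ta i).index, antipode (R := R) (rb.left j) *
                  ((antipode (R := R) ((ta i).left k) * (ta i).right k) *
                    ((sb j).left l * antipode (R := R) (ra.right i * (sb j).right l))) := by
                refine Finset.sum_congr rfl fun k _ => ?_
                simp only [mul_assoc]
            _ = antipode (R := R) (rb.left j) *
                  ((∑ k ∈ (ta i).index, antipode (R := R) ((ta i).left k) * (ta i).right k) *
                    ((sb j).left l * antipode (R := R) (ra.right i * (sb j).right l))) := by
                rw [← Finset.mul_sum, ← Finset.sum_mul]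
            _ = counit (R := R) (ra.left i) •
                  (antipode (R := R) (rb.left j) *
                    ((sb j).left l * antipode (R := R) (ra.right i * (sb j).right l))) := by
                rw [sum_antipode_mul_eq_smul (ta i)]
                simp [smul_mul_assoc, mul_smul_comm]
      _ = ∑ j ∈ rb.index, ∑ l ∈ (sb j).index,
            antipode (R := R) (rb.left j) *
              ((sb j).left l * antipode (R := R) (a * (sb j).right l)) := by
          refine Finset.sum_congr rfl fun j _ => Finset.sum_congr rfl fun l _ => ?_
          have h1 : ∑ i ∈ ra.index, counit (R := R) (ra.left i) •
              (antipode (R := R) (rb.left j) *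
                ((sb j).left l * antipode (R := R) (ra.right i * (sb j).right l)))
              = antipode (R := R) (rb.left j) * ((sb j).left l * antipode (R := R)
                  ((∑ i ∈ ra.index, counit (R := R) (ra.left i) • ra.right i) * (sb j).right l)) := by
            simp only [Finset.sum_mul, smul_mul_assoc, map_sum, map_smul, Finset.mul_sum,
              mul_smul_comm]
          rw [h1, sum_counit_smul_right' ra]
      _ = psiAux (R := R) a (∑ j ∈ rb.index, ∑ l ∈ (sb j).index,
            rb.left j ⊗ₜ[R] ((sb j).left l ⊗ₜ[R] (sb j).right l)) := by
          simp only [map_sum, psiAux_tmul]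
      _ = psiAux (R := R) a (∑ j ∈ rb.index, ∑ l ∈ (tb j).index,
            (tb j).left l ⊗ₜ[R] ((tb j).right l ⊗ₜ[R] rb.right j)) := by
          rw [hEb]
      _ = ∑ j ∈ rb.index, ∑ l ∈ (tb j).index,
            antipode (R := R) ((tb j).left l) *
              ((tb j).right l * antipode (R := R) (a * rb.right j)) := by
          simp only [map_sum, psiAux_tmul]
      _ = ∑ j ∈ rb.index, counit (R := R) (rb.left j) •
            antipode (R := R) (a * rb.right j) := by
          refine Finset.sum_congr rfl fun j _ => ?_
          calc ∑ l ∈ (tb j).index, antipode (R := R) ((tb j).left l) *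
                ((tb j).right l * antipode (R := R) (a * rb.right j))
              = (∑ l ∈ (tb j).index, antipode (R := R) ((tb j).left l) * (tb j).right l) *
                  antipode (R := R) (a * rb.right j) := by
                rw [Finset.sum_mul]
                exact Finset.sum_congr rfl fun l _ => (mul_assoc _ _ _).symm
            _ = counit (R := R) (rb.left j) • antipode (R := R) (a * rb.right j) := by
                rw [sum_antipode_mul_eq_smul (tb j)]
                simp [smul_mul_assoc]
      _ = antipode (R := R) (a * b) := by
          have h2 : ∑ j ∈ rb.index, counit (R := R) (rb.left j) •
              antipode (R := R) (a * rb.right j)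
              = antipode (R := R) (a * ∑ j ∈ rb.index, counit (R := R) (rb.left j) • rb.right j) := by
            simp only [Finset.mul_sum, map_sum, map_smul, mul_smul_comm]
          rw [h2, sum_counit_smul_right' rb]
  have claim1 : M = antipode (R := R) b * antipode (R := R) a := by
    calc M = ∑ j ∈ rb.index, ∑ l ∈ (sb j).index, ∑ i ∈ ra.index, ∑ k ∈ (sa i).index,
          (antipode (R := R) (rb.left j) * antipode (R := R) (ra.left i)) *
            (((sa i).left k * (sb j).left l) *
              antipode (R := R) ((sa i).right k * (sb j).right l)) := by
          rw [hM]; simp only [map_sum, phiAux_tmul]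
      _ = ∑ j ∈ rb.index, ∑ i ∈ ra.index, ∑ k ∈ (sa i).index, ∑ l ∈ (sb j).index,
          (antipode (R := R) (rb.left j) * antipode (R := R) (ra.left i)) *
            (((sa i).left k * (sb j).left l) *
              antipode (R := R) ((sa i).right k * (sb j).right l)) := by
          refine Finset.sum_congr rfl fun j _ => ?_
          rw [Finset.sum_comm]
          exact Finset.sum_congr rfl fun i _ => Finset.sum_comm
      _ = ∑ j ∈ rb.index, ∑ i ∈ ra.index,
          (antipode (R := R) (rb.left j) * antipode (R := R) (ra.left i)) *
            ((counit (R := R) (ra.right i) * counit (R := R) (rb.right j)) • 1) := by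
          refine Finset.sum_congr rfl fun j _ => Finset.sum_congr rfl fun i _ => ?_
          simp only [← Finset.mul_sum]
          congr 1
          rw [← Finset.sum_product']
          have := sum_mul_antipode_eq_smul (R := R) (mulRepr (sa i) (sb j))
          simpa [mulRepr, Bialgebra.counit_mul] using this
      _ = ∑ j ∈ rb.index, ∑ i ∈ ra.index,
          (counit (R := R) (rb.right j) • antipode (R := R) (rb.left j)) *
            (counit (R := R) (ra.right i) • antipode (R := R) (ra.left i)) := by
          refine Finset.sum_congr rfl fun j _ => Finset.sum_congr rfl fun i _ => ?_
          rw [smul_mul_smul_comm]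
          rw [mul_smul_comm, mul_one, mul_comm (counit (R := R) (ra.right i))]
      _ = (∑ j ∈ rb.index, counit (R := R) (rb.right j) • antipode (R := R) (rb.left j)) *
            (∑ i ∈ ra.index, counit (R := R) (ra.right i) • antipode (R := R) (ra.left i)) := by
          rw [Finset.sum_mul_sum]
      _ = antipode (R := R) b * antipode (R := R) a := by
          have hb := congrArg (antipode (R := R)) (sum_smul_counit_left' rb)
          rw [map_sum] at hb
          simp only [map_smul] at hb
          have ha := congrArg (antipode (R := R)) (sum_smul_counit_left' ra)
          rw [map_sum] at ha
          simp only [map_smul] at ha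
          rw [hb, ha]
  rw [← claim2, claim1]

end HopfAux

open scoped InnerProductSpace

lemma TensorProduct.exists_fin' {R M N : Type*} [CommSemiring R] [AddCommMonoid M]
    [AddCommMonoid N] [Module R M] [Module R N] (t : M ⊗[R] N) :
    ∃ (n : ℕ) (f : Fin n → M) (g : Fin n → N), t = ∑ i, f i ⊗ₜ[R] g i := by
  induction t with
  | zero => exact ⟨0, fun i => i.elim0, fun i => i.elim0, by simp⟩
  | tmul a b => exact ⟨1, fun _ => a, fun _ => b, by simp⟩
  | add u v hu hv =>
    obtain ⟨n, f, g, rfl⟩ := hu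
    obtain ⟨n', f', g', rfl⟩ := hv
    exact ⟨n + n', Fin.append f f', Fin.append g g', by
      rw [Fin.sum_univ_add]
      simp [Fin.append_left, Fin.append_right]⟩

/-- bilinear pairing used to make the LHS well-defined -/
noncomputable def pairMap {A : Type*} [Ring A] [HopfAlgebra ℂ A] [StarRing A] [StarModule ℂ A]
    {H : Type*} [NormedAddCommGroup H] [InnerProductSpace ℂ H]
    (c : A →ₗ[ℂ] H) : A ⊗[ℂ] A →ₗ[ℂ] ℂ :=
  TensorProduct.lift <| LinearMap.mk₂ ℂ
    (fun p q => ⟪c (antipode (R := ℂ) (star q)), c p⟫_ℂ)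
    (fun p p' q => by simp [inner_add_right])
    (fun a p q => by simp [inner_smul_right])
    (fun p q q' => by simp [star_add, inner_add_left])
    (fun a p q => by
      rw [star_smul, map_smul, map_smul, inner_smul_left, starRingEnd_apply, star_star,
        smul_eq_mul])

@[simp] lemma pairMap_tmul {A : Type*} [Ring A] [HopfAlgebra ℂ A] [StarRing A] [StarModule ℂ A]
    {H : Type*} [NormedAddCommGroup H] [InnerProductSpace ℂ H]
    (c : A →ₗ[ℂ] H) (p q : A) :
    pairMap c (p ⊗ₜ[ℂ] q) = ⟪c (antipode (R := ℂ) (star q)), c p⟫_ℂ := rfl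

theorem generator_on_products
    {A : Type*} [Ring A] [HopfAlgebra ℂ A]
    [StarRing A] [StarModule ℂ A]
    -- `A` is a Hopf *-algebra:
    (hΔstar : ∀ (x : A) (m : ℕ) (y z : Fin m → A),
      Coalgebra.comul (R := ℂ) x = ∑ i, y i ⊗ₜ[ℂ] z i →
      Coalgebra.comul (R := ℂ) (star x) = ∑ i, star (y i) ⊗ₜ[ℂ] star (z i))
    (hεstar : ∀ x : A,
      Coalgebra.counit (R := ℂ) (star x) = starRingEnd ℂ (Coalgebra.counit (R := ℂ) x))
    (hSstar : ∀ x : A, antipode (R := ℂ) (star (antipode (R := ℂ) (star x))) = x)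
    {H : Type*} [NormedAddCommGroup H] [InnerProductSpace ℂ H] [CompleteSpace H]
    (π : A →⋆ₐ[ℂ] (H →L[ℂ] H))
    (c : A →ₗ[ℂ] H)
    (hc : ∀ x y : A, c (x * y) = π x (c y) + Coalgebra.counit (R := ℂ) y • c x)
    (x y : A) (hx : Coalgebra.counit (R := ℂ) x = 0) (hy : Coalgebra.counit (R := ℂ) y = 0)
    (m : ℕ) (p q : Fin m → A)
    (hpq : Coalgebra.comul (R := ℂ) (star x * y) = ∑ j, p j ⊗ₜ[ℂ] q j) :
    ∑ j, ⟪c (antipode (R := ℂ) (star (q j))), c (p j)⟫_ℂ =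
      - ⟪c (antipode (R := ℂ) (star y)), c (star (antipode (R := ℂ) x))⟫_ℂ
      - ⟪c x, c y⟫_ℂ := by
  classical
  obtain ⟨n, x1, x2, hxrep⟩ := TensorProduct.exists_fin' (Coalgebra.comul (R := ℂ) x)
  obtain ⟨n', y1, y2, hyrep⟩ := TensorProduct.exists_fin' (Coalgebra.comul (R := ℂ) y)
  -- basic sum identities
  have hx2sum : ∑ i, Coalgebra.counit (R := ℂ) (x2 i) • x1 i = x := by
    simpa using sum_smul_counit_left' (⟨Finset.univ, x1, x2, hxrep.symm⟩ : Coalgebra.Repr ℂ x (Fin n))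
  have hx1sum : ∑ i, Coalgebra.counit (R := ℂ) (x1 i) • x2 i = x := by
    simpa using sum_counit_smul_right' (⟨Finset.univ, x1, x2, hxrep.symm⟩ : Coalgebra.Repr ℂ x (Fin n))
  have hxS : ∑ i, x1 i * antipode (R := ℂ) (x2 i) = 0 := by
    have h := sum_mul_antipode_eq_smul (R := ℂ)
      (⟨Finset.univ, x1, x2, hxrep.symm⟩ : Coalgebra.Repr ℂ x (Fin n))
    simpa [hx] using h
  have hy1sum : ∑ k, Coalgebra.counit (R := ℂ) (y1 k) • y2 k = y := by
    simpa using sum_counit_smul_right' (⟨Finset.univ, y1, y2, hyrep.symm⟩ : Coalgebra.Repr ℂ y (Fin n'))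
  have hy2sum : ∑ k, Coalgebra.counit (R := ℂ) (y2 k) • y1 k = y := by
    simpa using sum_smul_counit_left' (⟨Finset.univ, y1, y2, hyrep.symm⟩ : Coalgebra.Repr ℂ y (Fin n'))
  have hyeps : ∑ k, Coalgebra.counit (R := ℂ) (y1 k) * Coalgebra.counit (R := ℂ) (y2 k) = 0 := by
    have h := congrArg (Coalgebra.counit (R := ℂ)) hy1sum
    rw [map_sum] at h
    simp only [map_smul, smul_eq_mul] at h
    rw [hy] at h
    exact h
  have hc1 : c 1 = 0 := by
    have h := hc 1 1
    simp only [mul_one, map_one, Bialgebra.counit_one, one_smul,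
      ContinuousLinearMap.one_apply] at h
    exact left_eq_add.mp h
  have hadj : ∀ (a : A) (u v : H), ⟪π a u, v⟫_ℂ = ⟪u, π (star a) v⟫_ℂ := by
    intro a u v
    rw [map_star, ContinuousLinearMap.star_eq_adjoint]
    exact (ContinuousLinearMap.adjoint_inner_right _ _ _).symm
  -- key vector identities
  have hV1 : ∑ i, π (x1 i) (c (antipode (R := ℂ) (x2 i))) = - c x := by
    have hsum : ∑ i, c (x1 i * antipode (R := ℂ) (x2 i)) = 0 := by
      rw [← map_sum, hxS, map_zero]
    have hexp : ∀ i, c (x1 i * antipode (R := ℂ) (x2 i)) =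
        π (x1 i) (c (antipode (R := ℂ) (x2 i))) +
          Coalgebra.counit (R := ℂ) (x2 i) • c (x1 i) := by
      intro i; rw [hc, counit_antipode']
    rw [Finset.sum_congr rfl fun i _ => hexp i, Finset.sum_add_distrib] at hsum
    have h2 : ∑ i, Coalgebra.counit (R := ℂ) (x2 i) • c (x1 i) = c x := by
      calc ∑ i, Coalgebra.counit (R := ℂ) (x2 i) • c (x1 i)
          = c (∑ i, Coalgebra.counit (R := ℂ) (x2 i) • x1 i) := by
            rw [map_sum]; simp only [map_smul]
        _ = c x := by rw [hx2sum]
    rw [h2] at hsum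
    exact eq_neg_of_add_eq_zero_left hsum
  have hπ0 : ∑ i, (star (antipode (R := ℂ) (x2 i)) * star (x1 i)) = 0 := by
    calc ∑ i, star (antipode (R := ℂ) (x2 i)) * star (x1 i)
        = star (∑ i, x1 i * antipode (R := ℂ) (x2 i)) := by
          rw [star_sum]; exact Finset.sum_congr rfl fun i _ => (star_mul _ _).symm
      _ = 0 := by rw [hxS, star_zero]
  have hV2 : ∑ i, π (star (antipode (R := ℂ) (x2 i))) (c (star (x1 i)))
      = - c (star (antipode (R := ℂ) x)) := by
    have hsum : ∑ i, c (star (antipode (R := ℂ) (x2 i)) * star (x1 i)) = 0 := by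
      rw [← map_sum, hπ0, map_zero]
    rw [Finset.sum_congr rfl fun i _ => hc _ _, Finset.sum_add_distrib] at hsum
    have h2 : ∑ i, Coalgebra.counit (R := ℂ) (star (x1 i)) •
        c (star (antipode (R := ℂ) (x2 i))) = c (star (antipode (R := ℂ) x)) := by
      have hterm : ∀ i : Fin n, Coalgebra.counit (R := ℂ) (star (x1 i)) •
          c (star (antipode (R := ℂ) (x2 i)))
          = c (star (antipode (R := ℂ) (Coalgebra.counit (R := ℂ) (x1 i) • x2 i))) := by
        intro i
        rw [map_smul, star_smul, map_smul, hεstar, starRingEnd_apply]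
      rw [Finset.sum_congr rfl fun i _ => hterm i]
      have h3 := congrArg (fun t => c (star (antipode (R := ℂ) t))) hx1sum
      rw [← h3, map_sum, star_sum, map_sum]
    rw [h2] at hsum
    exact eq_neg_of_add_eq_zero_left hsum
  -- the comultiplication of the product
  have hΔxstar := hΔstar x n x1 x2 hxrep
  have hcomul : Coalgebra.comul (R := ℂ) (star x * y)
      = ∑ i, ∑ k, (star (x1 i) * y1 k) ⊗ₜ[ℂ] (star (x2 i) * y2 k) := by
    rw [Bialgebra.comul_mul, hΔxstar, hyrep, Finset.sum_mul_sum]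
    simp [Algebra.TensorProduct.tmul_mul_tmul]
  have hΨ : ∑ j, ⟪c (antipode (R := ℂ) (star (q j))), c (p j)⟫_ℂ
      = ∑ i, ∑ k, ⟪c (antipode (R := ℂ) (star (star (x2 i) * y2 k))),
          c (star (x1 i) * y1 k)⟫_ℂ := by
    have h1 := congrArg (pairMap c) hpq
    have h2 := congrArg (pairMap c) hcomul
    simp only [map_sum, pairMap_tmul] at h1 h2
    exact h1.symm.trans h2
  rw [hΨ]
  -- expand each summand into four terms
  have hsplit : ∀ (i : Fin n) (k : Fin n'),
      ⟪c (antipode (R := ℂ) (star (star (x2 i) * y2 k))), c (star (x1 i) * y1 k)⟫_ℂ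
      = ⟪c (antipode (R := ℂ) (star (y2 k))),
          π (star (antipode (R := ℂ) (x2 i)) * star (x1 i)) (c (y1 k))⟫_ℂ
        + Coalgebra.counit (R := ℂ) (y1 k) * ⟪c (antipode (R := ℂ) (star (y2 k))),
            π (star (antipode (R := ℂ) (x2 i))) (c (star (x1 i)))⟫_ℂ
        + Coalgebra.counit (R := ℂ) (y2 k) *
            ⟪π (x1 i) (c (antipode (R := ℂ) (x2 i))), c (y1 k)⟫_ℂ
        + (Coalgebra.counit (R := ℂ) (y1 k) * Coalgebra.counit (R := ℂ) (y2 k)) *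
            ⟪c (antipode (R := ℂ) (x2 i)), c (star (x1 i))⟫_ℂ := by
    intro i k
    rw [star_mul, star_star, antipode_mul_rev, hc, hc, counit_antipode', hεstar]
    rw [inner_add_left, inner_add_right, inner_add_right, inner_smul_left, inner_smul_right,
      inner_smul_left, inner_smul_right]
    rw [hadj (antipode (R := ℂ) (x2 i)) (c (antipode (R := ℂ) (star (y2 k))))
        (π (star (x1 i)) (c (y1 k))),
      ← ContinuousLinearMap.mul_apply, ← map_mul]
    rw [hadj (antipode (R := ℂ) (x2 i)) (c (antipode (R := ℂ) (star (y2 k)))) (c (star (x1 i)))]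
    rw [← hadj (x1 i) (c (antipode (R := ℂ) (x2 i))) (c (y1 k))]
    simp only [starRingEnd_apply, star_star, smul_eq_mul]
    ring
  rw [Finset.sum_congr rfl fun i _ => Finset.sum_congr rfl fun k _ => hsplit i k]
  simp only [Finset.sum_add_distrib]
  -- term 1 vanishes
  have hS1 : ∑ i, ∑ k, ⟪c (antipode (R := ℂ) (star (y2 k))),
      π (star (antipode (R := ℂ) (x2 i)) * star (x1 i)) (c (y1 k))⟫_ℂ = 0 := by
    rw [Finset.sum_comm]
    refine Finset.sum_eq_zero fun k _ => ?_
    rw [← inner_sum]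
    have h0 : ∑ i, π (star (antipode (R := ℂ) (x2 i)) * star (x1 i)) (c (y1 k)) = 0 := by
      rw [← ContinuousLinearMap.sum_apply, ← map_sum, hπ0, map_zero,
        ContinuousLinearMap.zero_apply]
    rw [h0, inner_zero_right]
  -- term 2
  have hS2 : ∑ i, ∑ k, Coalgebra.counit (R := ℂ) (y1 k) *
      ⟪c (antipode (R := ℂ) (star (y2 k))),
        π (star (antipode (R := ℂ) (x2 i))) (c (star (x1 i)))⟫_ℂ
      = - ⟪c (antipode (R := ℂ) (star y)), c (star (antipode (R := ℂ) x))⟫_ℂ := by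
    rw [Finset.sum_comm]
    have step1 : ∀ k : Fin n', ∑ i, Coalgebra.counit (R := ℂ) (y1 k) *
        ⟪c (antipode (R := ℂ) (star (y2 k))),
          π (star (antipode (R := ℂ) (x2 i))) (c (star (x1 i)))⟫_ℂ
        = ⟪c (antipode (R := ℂ) (star (Coalgebra.counit (R := ℂ) (y1 k) • y2 k))),
            - c (star (antipode (R := ℂ) x))⟫_ℂ := by
      intro k
      rw [← Finset.mul_sum, ← inner_sum, hV2]
      rw [star_smul, map_smul, map_smul, inner_smul_left, starRingEnd_apply, star_star]
    rw [Finset.sum_congr rfl fun k _ => step1 k]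
    rw [← sum_inner]
    have : ∑ k, c (antipode (R := ℂ) (star (Coalgebra.counit (R := ℂ) (y1 k) • y2 k)))
        = c (antipode (R := ℂ) (star y)) := by
      have h3 := congrArg (fun t => c (antipode (R := ℂ) (star t))) hy1sum
      rw [← h3, star_sum, map_sum, map_sum]
    rw [this, inner_neg_right]
  -- term 3
  have hS3 : ∑ i, ∑ k, Coalgebra.counit (R := ℂ) (y2 k) *
      ⟪π (x1 i) (c (antipode (R := ℂ) (x2 i))), c (y1 k)⟫_ℂ
      = - ⟪c x, c y⟫_ℂ := by
    rw [Finset.sum_comm]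
    have step1 : ∀ k : Fin n', ∑ i, Coalgebra.counit (R := ℂ) (y2 k) *
        ⟪π (x1 i) (c (antipode (R := ℂ) (x2 i))), c (y1 k)⟫_ℂ
        = ⟪- c x, Coalgebra.counit (R := ℂ) (y2 k) • c (y1 k)⟫_ℂ := by
      intro k
      rw [← Finset.mul_sum, ← sum_inner, hV1, inner_smul_right]
    rw [Finset.sum_congr rfl fun k _ => step1 k, ← inner_sum]
    have : ∑ k, Coalgebra.counit (R := ℂ) (y2 k) • c (y1 k) = c y := by
      calc ∑ k, Coalgebra.counit (R := ℂ) (y2 k) • c (y1 k)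
          = c (∑ k, Coalgebra.counit (R := ℂ) (y2 k) • y1 k) := by
            rw [map_sum]; simp only [map_smul]
        _ = c y := by rw [hy2sum]
    rw [this, inner_neg_left]
  -- term 4 vanishes
  have hS4 : ∑ i, ∑ k, (Coalgebra.counit (R := ℂ) (y1 k) * Coalgebra.counit (R := ℂ) (y2 k)) *
      ⟪c (antipode (R := ℂ) (x2 i)), c (star (x1 i))⟫_ℂ = 0 := by
    refine Finset.sum_eq_zero fun i _ => ?_
    rw [← Finset.sum_mul, hyeps, zero_mul]
  rw [hS1, hS2, hS3, hS4]
  ring
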